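/- In any sequence over an alphabet of k+1 symbols of length at least 2k+2, there exists a d-subsequence for some d with 1 ≤ d ≤ k that contains a repetition (two consecutive equal blocks). Equivalently, no sequence of length ≥ 2k+2 over k+1 symbols is k-Thue. -/

import Mathlib

/-- A sequence is non-repetitive (Thue) if it contains no factor `w ++ w` with `w` nonempty. -/
def NonRep {α : Type*} (s : List α) : Prop :=
  ∀ w : List α, w ≠ [] → ¬ (w ++ w) <:+: s

/-- The `d`-subsequence of `s` starting at (0-based) index `i`: the terms at indices
`i, i+d, i+2d, ...`. -/
def dSubseq {α : Type*} (s : List α) (i d : ℕ) : List α :=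
  (List.range s.length).filterMap
    (fun j => if i ≤ j ∧ (j - i) % d = 0 then s[j]? else none)

/-- A sequence is `k`-Thue if every `d`-subsequence, for `1 ≤ d ≤ k`, is non-repetitive. -/
def IsKThue {α : Type*} (k : ℕ) (s : List α) : Prop :=
  ∀ d, 1 ≤ d → d ≤ k → ∀ i, NonRep (dSubseq s i d)

lemma filterMap_getElem? {α : Type*} (l : List α) (n : ℕ) (hn : n ≤ l.length) :
    (List.range n).filterMap (fun j => l[j]?) = l.take n := by
  induction n with
  | zero => simp
  | succ n ih =>
      rw [List.range_succ, List.filterMap_append, ih (by omega), List.take_succ]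
      cases h : l[n]? <;> simp [h]

lemma dSubseq_zero_one {α : Type*} (s : List α) : dSubseq s 0 1 = s := by
  unfold dSubseq
  have : ∀ j : ℕ, (if 0 ≤ j ∧ (j - 0) % 1 = 0 then s[j]? else none) = s[j]? := by
    intro j; simp [Nat.mod_one]
  simp only [this]
  rw [filterMap_getElem? s s.length le_rfl, List.take_length]

lemma dSubseq_head2 {α : Type*} (s : List α) (i d : ℕ) (hd : 1 ≤ d)
    (h : i + d < s.length) :
    ∃ rest, dSubseq s i d = s[i]'(by omega) :: s[i+d]'(by omega) :: rest := by
  classical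
  set f : ℕ → Option α := fun j => if i ≤ j ∧ (j - i) % d = 0 then s[j]? else none with hf
  have hsplit : List.range s.length =
      (List.range' 0 i ++ (i :: List.range' (i+1) (d-1))) ++
        ((i+d) :: List.range' (i+d+1) (s.length - (i+d) - 1)) := by
    rw [List.range_eq_range']
    have h1 : List.range' 0 i ++ List.range' i (s.length - i) = List.range' 0 s.length := by
      have := List.range'_append (s := 0) (m := i) (n := s.length - i) (step := 1)
      simp only [Nat.one_mul, Nat.zero_add] at this
      rw [this]
      congr 1
      omega
    have h2 : List.range' i d ++ List.range' (i+d) (s.length - i - d)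
        = List.range' i (s.length - i) := by
      have := List.range'_append (s := i) (m := d) (n := s.length - i - d) (step := 1)
      simp only [Nat.one_mul] at this
      rw [this]
      congr 1
      omega
    have h3 : List.range' i d = i :: List.range' (i+1) (d-1) := by
      have : d = (d-1) + 1 := by omega
      conv_lhs => rw [this, List.range'_succ]
    have h4 : List.range' (i+d) (s.length - i - d)
        = (i+d) :: List.range' (i+d+1) (s.length - i - d - 1) := by
      have : s.length - i - d = (s.length - i - d - 1) + 1 := by omega
      conv_lhs => rw [this, List.range'_succ]
    have h5 : s.length - (i+d) - 1 = s.length - i - d - 1 := by omega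
    rw [← h1, ← h2, h3, h4, h5, List.append_assoc]
  refine ⟨(List.range' (i+d+1) (s.length - (i+d) - 1)).filterMap f, ?_⟩
  unfold dSubseq
  rw [hsplit, List.filterMap_append, List.filterMap_append]
  have e1 : (List.range' 0 i).filterMap f = [] := by
    rw [List.filterMap_eq_nil_iff]
    intro j hj
    have := List.mem_range'_1.mp hj
    simp only [hf]
    rw [if_neg]; omega
  have e2 : (List.range' (i+1) (d-1)).filterMap f = [] := by
    rw [List.filterMap_eq_nil_iff]
    intro j hj
    have hj' := List.mem_range'_1.mp hj
    simp only [hf]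
    rw [if_neg]
    rintro ⟨h1, h2⟩
    rw [Nat.mod_eq_of_lt (by omega)] at h2
    omega
  have e3 : f i = some (s[i]'(by omega)) := by
    simp only [hf]
    rw [if_pos ⟨le_rfl, by simp⟩, List.getElem?_eq_getElem (by omega)]
  have e4 : f (i+d) = some (s[i+d]'(by omega)) := by
    simp only [hf]
    rw [if_pos ⟨by omega, by simp⟩, List.getElem?_eq_getElem (by omega)]
  rw [List.filterMap_cons_some e3, List.filterMap_cons_some e4, e1, e2]
  simp

/-- No sequence of length at least `2k+2` over an alphabet of `k+1` symbols is `k`-Thue. -/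
theorem no_kThue_of_small_alphabet (k : ℕ) (hk : 1 ≤ k)
    (s : List (Fin (k + 1))) (hlen : 2 * k + 2 ≤ s.length) :
    ¬ IsKThue k s := by
  intro hThue
  -- Step 1: no two equal entries at distance ≤ k
  have H : ∀ i j (hi : i < s.length) (hj : j < s.length), i < j → j - i ≤ k →
      s[i] ≠ s[j] := by
    intro i j hi hj hij hd heq
    obtain ⟨d, rfl⟩ := Nat.exists_eq_add_of_le hij.le
    have hd1 : 1 ≤ d := by omega
    have hd' : d ≤ k := by omega
    have hbd : i + d < s.length := by omega
    obtain ⟨rest, hrest⟩ := dSubseq_head2 s i d hd1 hbd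
    have hne := hThue d hd1 hd' i ([s[i]]) (by simp)
    apply hne
    refine ⟨[], rest, ?_⟩
    rw [hrest, ← heq]
    simp
  -- Step 2: periodicity with period k+1 on first 2k+2 entries
  have per : ∀ m, ∀ _ : m ≤ k, s[m]'(by omega) = s[k + 1 + m]'(by omega) := by
    intro m hm
    have hb : ∀ t : Fin (k+1), m + 1 + (t : ℕ) < s.length := by
      intro t; have := t.isLt; omega
    have finj : Function.Injective (fun t : Fin (k+1) => s[m + 1 + (t:ℕ)]'(hb t)) := by
      intro t1 t2 he
      simp only at he
      by_contra hne
      have h12 : (t1 : ℕ) ≠ (t2 : ℕ) := fun h => hne (Fin.ext h)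
      have hl1 := t1.isLt
      have hl2 := t2.isLt
      rcases Nat.lt_or_ge (t1 : ℕ) (t2 : ℕ) with hlt | hge
      · exact H (m+1+t1) (m+1+t2) (by omega) (by omega) (by omega)
          (by omega) he
      · exact H (m+1+t2) (m+1+t1) (by omega) (by omega) (by omega)
          (by omega) he.symm
    have fsurj := Finite.surjective_of_injective finj
    obtain ⟨t, ht⟩ := fsurj (s[m]'(by omega))
    simp only at ht
    have hl := t.isLt
    have htk : (t : ℕ) = k := by
      by_contra htk
      have ht' : (t : ℕ) < k := by omega
      exact H m (m+1+t) (by omega) (by omega) (by omega) (by omega) ht.symm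
    rw [← ht]
    congr 1
    omega
  -- Step 3: repetition in s itself (d = 1)
  have hlt : (s.take (k+1)).length = k+1 := by
    rw [List.length_take]; omega
  have hne := hThue 1 le_rfl hk 0 (s.take (k+1))
    (by intro h; rw [h] at hlt; simp at hlt)
  apply hne
  rw [dSubseq_zero_one]
  have htake : s.take (k+1) = (s.drop (k+1)).take (k+1) := by
    apply List.ext_getElem
    · rw [List.length_take, List.length_take, List.length_drop]
      omega
    · intro m h1 h2
      rw [List.getElem_take, List.getElem_take, List.getElem_drop]
      have hm : m ≤ k := by
        rw [List.length_take] at h1; omega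
      exact per m hm
  have heqq : s.take (k+1) ++ s.take (k+1) = s.take ((k+1)+(k+1)) := by
    have := List.take_add (l := s) (i := k+1) (j := k+1)
    rw [this, ← htake]
  have hpre : s.take (k+1) ++ s.take (k+1) <+: s := by
    rw [heqq]; exact List.take_prefix _ _
  exact hpre.isInfix
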